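/- Let L and M be complementary subspaces of ℂ^m (i.e. L + M = ℂ^m and L ∩ M = {0}), and let U ∈ ℂ^{m×p} and V ∈ ℂ^{q×m} be matrices with R(U) = L and N(V) = M. Then the matrix U(VU)†V is idempotent with range L and null space M; that is, U(VU)†V = P_{L,M}. -/

import Mathlib

open Matrix

/-- The four Penrose conditions characterizing the Moore-Penrose inverse. -/
def IsMoorePenrose {m n : ℕ} (A : Matrix (Fin m) (Fin n) ℂ)
    (X : Matrix (Fin n) (Fin m) ℂ) : Prop :=
  A * X * A = A ∧ X * A * X = X ∧ (A * X)ᴴ = A * X ∧ (X * A)ᴴ = X * A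

/-- The range (column space) of a matrix, as a subspace of Euclidean space. -/
noncomputable def mrange {m n : ℕ} (A : Matrix (Fin m) (Fin n) ℂ) :
    Submodule ℂ (EuclideanSpace ℂ (Fin m)) :=
  LinearMap.range (Matrix.toEuclideanLin A)

/-- The null space of a matrix, as a subspace of Euclidean space. -/
noncomputable def mker {m n : ℕ} (A : Matrix (Fin m) (Fin n) ℂ) :
    Submodule ℂ (EuclideanSpace ℂ (Fin n)) :=
  LinearMap.ker (Matrix.toEuclideanLin A)

lemma mem_mrange_iff {m n : ℕ} (A : Matrix (Fin m) (Fin n) ℂ)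
    (y : EuclideanSpace ℂ (Fin m)) : y ∈ mrange A ↔ ∃ x : EuclideanSpace ℂ (Fin n), A *ᵥ x = y := by
  simp only [mrange, LinearMap.mem_range, Matrix.toEuclideanLin_apply, WithLp.ext_iff, WithLp.ofLp_toLp]

lemma mem_mker_iff {m n : ℕ} (A : Matrix (Fin m) (Fin n) ℂ)
    (x : EuclideanSpace ℂ (Fin n)) : x ∈ mker A ↔ A *ᵥ x = 0 := by
  simp only [mker, LinearMap.mem_ker, Matrix.toEuclideanLin_apply, WithLp.ext_iff, WithLp.ofLp_toLp, WithLp.ofLp_zero]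

lemma ext_mulVec {m n : ℕ} (A B : Matrix (Fin m) (Fin n) ℂ)
    (h : ∀ x, A *ᵥ x = B *ᵥ x) : A = B := by
  ext i j
  have := congrFun (h (Pi.single j 1)) i
  simpa [Matrix.mulVec_single] using this

/-- If `L`, `M` are complementary subspaces of `ℂ^m`, `R(U) = L`, `N(V) = M`,
then `U (VU)† V` is idempotent with range `L` and null space `M`, i.e. it equals `P_{L,M}`. -/
theorem stmt0 {m p q : ℕ} (L M : Submodule ℂ (EuclideanSpace ℂ (Fin m)))
    (hsum : L ⊔ M = ⊤) (hint : L ⊓ M = ⊥)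
    (U : Matrix (Fin m) (Fin p) ℂ) (V : Matrix (Fin q) (Fin m) ℂ)
    (hU : mrange U = L) (hV : mker V = M)
    (VUd : Matrix (Fin p) (Fin q) ℂ) (hVUd : IsMoorePenrose (V * U) VUd) :
    (U * VUd * V) * (U * VUd * V) = U * VUd * V ∧
      mrange (U * VUd * V) = L ∧ mker (U * VUd * V) = M := by
  obtain ⟨h1, h2, _, _⟩ := hVUd
  -- z ∈ L ∩ M ⇒ z = 0
  have hLM : ∀ z : Fin m → ℂ, WithLp.toLp 2 z ∈ L → WithLp.toLp 2 z ∈ M → z = 0 := by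
    intro z hzL hzM
    have : WithLp.toLp 2 z ∈ L ⊓ M := ⟨hzL, hzM⟩
    rw [hint] at this
    simpa using this
  -- key identity 1 : U * VUd * V * U = U
  have key1 : U * VUd * V * U = U := by
    apply ext_mulVec
    intro x
    have hdiff : U *ᵥ ((VUd * V * U) *ᵥ x) - U *ᵥ x = 0 := by
      apply hLM
      · rw [← hU]
        rw [mem_mrange_iff]
        exact ⟨WithLp.toLp 2 ((VUd * V * U) *ᵥ x - x), by simp [Matrix.mulVec_sub]⟩
      · rw [← hV, mem_mker_iff]
        have : V *ᵥ (U *ᵥ ((VUd * V * U) *ᵥ x)) = (V * U * VUd * (V * U)) *ᵥ x := by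
          simp [Matrix.mulVec_mulVec, Matrix.mul_assoc]
        rw [WithLp.ofLp_toLp, Matrix.mulVec_sub, this, h1]
        simp [Matrix.mulVec_mulVec]
    have := sub_eq_zero.mp hdiff
    calc (U * VUd * V * U) *ᵥ x = U *ᵥ ((VUd * V * U) *ᵥ x) := by
          simp [Matrix.mulVec_mulVec, Matrix.mul_assoc]
      _ = U *ᵥ x := this
  -- key identity 2 : V * U * VUd * V = V
  have key2 : V * U * VUd * V = V := by
    apply ext_mulVec
    intro x
    obtain ⟨x, rfl⟩ : ∃ y : EuclideanSpace ℂ (Fin m), y.ofLp = x := ⟨WithLp.toLp 2 x, rfl⟩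
    have hx : x ∈ L ⊔ M := by rw [hsum]; trivial
    obtain ⟨l, hl, mm, hm, hx⟩ := Submodule.mem_sup.mp hx
    rw [← hU, mem_mrange_iff] at hl
    obtain ⟨a, ha⟩ := hl
    rw [← hV, mem_mker_iff] at hm
    subst hx
    have hVx : V *ᵥ (l + mm) = (V * U) *ᵥ a := by
      rw [Matrix.mulVec_add, hm, add_zero, ← ha, Matrix.mulVec_mulVec]
    calc (V * U * VUd * V) *ᵥ (l + mm) = (V * U * VUd) *ᵥ (V *ᵥ (l + mm)) := by
          simp [Matrix.mulVec_mulVec]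
      _ = (V * U * VUd * (V * U)) *ᵥ a := by rw [hVx, Matrix.mulVec_mulVec]
      _ = (V * U) *ᵥ a := by rw [h1]
      _ = V *ᵥ (l + mm) := hVx.symm
  refine ⟨?_, ?_, ?_⟩
  · calc (U * VUd * V) * (U * VUd * V) = U * (VUd * (V * U * VUd * V)) := by
          simp only [Matrix.mul_assoc]
      _ = U * VUd * V := by rw [key2, Matrix.mul_assoc]
  · rw [← hU]
    apply le_antisymm
    · rintro y ⟨x, rfl⟩
      refine ⟨WithLp.toLp 2 ((VUd * V) *ᵥ x), ?_⟩
      show WithLp.toLp 2 (U *ᵥ ((VUd * V) *ᵥ x)) = WithLp.toLp 2 ((U * VUd * V) *ᵥ x)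
      simp [Matrix.mulVec_mulVec, Matrix.mul_assoc]
    · rintro y ⟨x, rfl⟩
      refine ⟨WithLp.toLp 2 (U *ᵥ x), ?_⟩
      show WithLp.toLp 2 ((U * VUd * V) *ᵥ (U *ᵥ x)) = WithLp.toLp 2 (U *ᵥ x)
      rw [Matrix.mulVec_mulVec, key1]
  · rw [← hV]
    apply le_antisymm
    · intro x hx
      have hx' : (U * VUd * V) *ᵥ x = 0 := (mem_mker_iff _ _).mp hx
      rw [mem_mker_iff]
      have : (V * (U * VUd * V)) *ᵥ x = 0 := by
        rw [← Matrix.mulVec_mulVec, hx', Matrix.mulVec_zero]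
      rwa [show V * (U * VUd * V) = V by simp only [← Matrix.mul_assoc]; exact key2] at this
    · intro x hx
      have hx' : V *ᵥ x = 0 := (mem_mker_iff _ _).mp hx
      rw [mem_mker_iff]
      rw [← Matrix.mulVec_mulVec, hx', Matrix.mulVec_zero]
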